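/- Let N = n(n-1)/2 and define the sequence a_0 = n, a_{t+1} = a_t - a_t(a_t - 1)/(2(N - t)). Then for all t with 0 ≤ t ≤ N/ω (where ω → ∞), a_t = (n²/(n+t))(1 + ε_t) with |ε_t| ≤ 2t/(N-t). In particular, a_t is bounded between (n²/(n+t))(1 - 2t/(N-t)) and n²/(n+t). -/

import Mathlib

set_option maxHeartbeats 1000000 in
private lemma keyS (m s : ℝ) (hm : 3 ≤ m) (hs : 0 ≤ s)
    (hg : 4 ≤ m^2 - m - 2*s) :
    0 ≤ ((m+s)+1) * ((m^2-m-2*s) - 2) * (((m^2-m-2*s)+1)*(m+s) - m^2)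
        + 6*(m^2-m-2*s)*(m+s)^2 - (m^2-m-2*s)^2*(m+s)^2 := by
  have hx : (0:ℝ) ≤ m - 3 := by linarith
  have hg' : (0:ℝ) ≤ (m^2 - m - 2*s) - 4 := by linarith
  nlinarith [mul_nonneg (mul_nonneg hs hs) hg', mul_nonneg hs hg',
    mul_nonneg (mul_nonneg hx hs) hg', mul_nonneg hx hs,
    mul_nonneg (mul_nonneg hx hx) hs, mul_nonneg hx hx,
    mul_nonneg (mul_nonneg hx hx) hx,
    mul_nonneg (mul_nonneg (mul_nonneg hx hx) hx) hx, hs, hx]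

set_option maxHeartbeats 1000000 in
private lemma step (m s a b : ℝ) (hm : 3 ≤ m) (hs : 0 ≤ s)
    (hD4 : 4 ≤ m^2 - m - 2*s)
    (hb : b * (m^2 - m - 2*s) = a * ((m^2 - m - 2*s) + 1 - a))
    (ha1 : 1 ≤ a) (hac : a * (m + s) ≤ m^2)
    (haL : m^2 * ((m^2 - m - 2*s) - 4*s) ≤ a * ((m + s) * (m^2 - m - 2*s))) :
    1 ≤ b ∧ b * ((m + s) + 1) ≤ m^2 ∧
      m^2 * ((m^2 - m - 2*s) - 4*s - 6) ≤
        b * (((m + s) + 1) * ((m^2 - m - 2*s) - 2)) := by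
  have hx : (0:ℝ) ≤ m - 3 := by linarith
  have hp : (0:ℝ) < m + s := by linarith
  have hD0 : (0:ℝ) < m^2 - m - 2*s := by linarith
  have hm2 : (0:ℝ) < m^2 := by positivity
  have hg' : (0:ℝ) ≤ (m^2 - m - 2*s) - 4 := by linarith
  -- vertex bound  2c ≤ D+1  in cleared form
  have hV : 2*m^2 ≤ ((m^2 - m - 2*s)+1)*(m+s) := by
    nlinarith [mul_nonneg hs hg', mul_nonneg hx hg', hg', hx, hs,
      mul_nonneg hx hx, mul_nonneg (mul_nonneg hx hx) hx, mul_nonneg hx hs]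
  have ha2 : 2*a ≤ (m^2 - m - 2*s) + 1 := by nlinarith [hac, hV, hp]
  have goal1 : 1 ≤ b := by
    nlinarith [mul_nonneg (sub_nonneg.2 ha1)
      (show (0:ℝ) ≤ (m^2 - m - 2*s) - a by linarith), hb, hD0]
  refine ⟨goal1, ?_, ?_⟩
  · -- upper bound
    have h0 : (0:ℝ) ≤ ((m^2-m-2*s)+1)*(m+s) - m^2 - a*(m+s) := by
      linarith [hV, hac]
    have h1 : a*((m^2-m-2*s)+1-a)*(m+s)^2
        ≤ m^2*((((m^2-m-2*s))+1)*(m+s) - m^2) := by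
      nlinarith [mul_nonneg (sub_nonneg.2 hac) h0]
    have hpoly : m^2*(((((m^2-m-2*s))+1)*(m+s) - m^2)*((m+s)+1))
        ≤ m^2*((m^2-m-2*s)*(m+s)^2) := by
      apply mul_le_mul_of_nonneg_left _ hm2.le
      nlinarith [hs, hm, mul_nonneg hs hs,
        mul_nonneg hs (show (0:ℝ) ≤ m - 1 by linarith),
        mul_nonneg hx (show (0:ℝ) ≤ m by linarith)]
    refine le_of_mul_le_mul_right ?_
      (show (0:ℝ) < (m^2-m-2*s)*(m+s)^2 by positivity)
    have hbb : b*((m+s)+1)*((m^2-m-2*s)*(m+s)^2)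
        = a*((m^2-m-2*s)+1-a)*(m+s)^2*((m+s)+1) := by
      linear_combination (((m+s)+1)*(m+s)^2) * hb
    have h1' : a*((m^2-m-2*s)+1-a)*(m+s)^2*((m+s)+1)
        ≤ m^2*((((m^2-m-2*s))+1)*(m+s) - m^2)*((m+s)+1) :=
      mul_le_mul_of_nonneg_right h1 (by linarith)
    linarith [hbb, h1', hpoly]
  · -- lower bound
    rcases le_total (m^2*((m^2-m-2*s) - 4*s)) ((m+s)*(m^2-m-2*s)) with hcase | hcase
    · -- here L ≤ 1, show L' ≤ 1 ≤ b
      have h3 : m^2*((m^2-m-2*s) - 4*s - 6) ≤ ((m+s)+1)*((m^2-m-2*s)-2) := by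
        nlinarith [hcase, hD4, hm, hs, mul_nonneg hx (show (0:ℝ) ≤ m by linarith)]
      have hnn : (0:ℝ) ≤ ((m+s)+1)*((m^2-m-2*s)-2) := by
        apply mul_nonneg <;> linarith
      nlinarith [h3, mul_nonneg (sub_nonneg.2 goal1) hnn]
    · -- here L ≥ 1
      have hA : (0:ℝ) ≤ (m^2-m-2*s) - 4*s := by
        nlinarith [hcase, mul_pos hp hD0, hm2]
      have hS := keyS m s hm hs hD4
      have hQ : ((m^2-m-2*s) - 4*s - 6)*((m^2-m-2*s)^2*(m+s)^2) ≤
          ((m^2-m-2*s) - 4*s)*(((m+s)+1)*((m^2-m-2*s)-2)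
            *(((m^2-m-2*s)+1)*(m+s) - m^2)) := by
        nlinarith [mul_nonneg hA hS,
          mul_nonneg (mul_nonneg hs hD0.le) (sq_nonneg (m+s))]
      have hfac1 : (0:ℝ) ≤ a*((m+s)*(m^2-m-2*s)) - m^2*((m^2-m-2*s) - 4*s) := by
        linarith
      have hfac2 : (0:ℝ) ≤ ((m^2-m-2*s)+1)*(m+s) - a*(m+s) := by
        nlinarith [ha2, hp, ha1]
      have hfac3 : (0:ℝ) ≤ m^2*((m^2-m-2*s) - 4*s) := mul_nonneg hm2.le hA
      have hfac4 : (0:ℝ) ≤ m^2 - a*(m+s) := by linarith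
      have hbb : b*((m^2-m-2*s)^2*(m+s)^2)
          = a*((m^2-m-2*s)+1-a)*((m^2-m-2*s)*(m+s)^2) := by
        linear_combination ((m^2-m-2*s)*(m+s)^2) * hb
      have h1' : m^2*((m^2-m-2*s) - 4*s)*(((m^2-m-2*s)+1)*(m+s) - m^2)
          ≤ b*((m^2-m-2*s)^2*(m+s)^2) := by
        nlinarith [mul_nonneg hfac1 hfac2, mul_nonneg hfac3 hfac4, hbb]
      refine le_of_mul_le_mul_right ?_
        (show (0:ℝ) < (m^2-m-2*s)^2*(m+s)^2 by positivity)
      have hQ' := mul_le_mul_of_nonneg_left hQ hm2.le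
      have hmono : (0:ℝ) ≤ ((m+s)+1)*((m^2-m-2*s)-2) := by
        apply mul_nonneg <;> linarith
      have h2' := mul_le_mul_of_nonneg_right h1' hmono
      linarith [hQ', h2']

private lemma invariant (n : ℕ) (hn : 0 < n) (N : ℝ)
    (hN : N = (n : ℝ) * ((n : ℝ) - 1) / 2)
    (a : ℕ → ℝ) (ha0 : a 0 = n)
    (harec : ∀ t : ℕ, (t : ℝ) < N →
      a (t + 1) = a t - a t * (a t - 1) / (2 * (N - (t : ℝ)))) :
    ∀ t : ℕ, (t : ℝ) < N →
      1 ≤ a t ∧ a t * ((n:ℝ) + t) ≤ (n:ℝ)^2 ∧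
        (n:ℝ)^2 * (((n:ℝ)^2 - n - 2*t) - 4*t) ≤
          a t * (((n:ℝ) + t) * ((n:ℝ)^2 - n - 2*t)) := by
  intro t
  induction t with
  | zero =>
    intro _
    refine ⟨by rw [ha0]; exact_mod_cast hn, ?_, ?_⟩
    · refine le_of_eq ?_
      rw [ha0]; push_cast; ring
    · refine le_of_eq ?_
      rw [ha0]; push_cast; ring
  | succ t ih =>
    intro h
    push_cast at h
    have ht : (t : ℝ) < N := by linarith
    obtain ⟨h1, h2, h3⟩ := ih ht
    have h1n : (1:ℕ) ≤ n := hn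
    obtain ⟨k, hk⟩ : Even ((n-1) * n) := by
      have := Nat.even_mul_succ_self (n-1)
      rwa [Nat.sub_add_cancel hn] at this
    have hk' : (n - 1) * n = 2 * k := by omega
    have hr : ((n:ℝ) - 1) * (n:ℝ) = 2 * (k:ℝ) := by
      have hc := congrArg (fun x : ℕ => (x:ℝ)) hk'
      push_cast [h1n] at hc
      linarith
    have hNk : N = (k:ℝ) := by rw [hN]; nlinarith [hr]
    have htk : t + 1 < k := by
      have : ((t:ℝ)) + 1 < (k:ℝ) := by rw [← hNk]; exact h
      exact_mod_cast this
    have hn3 : 3 ≤ n := by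
      by_contra hcon
      push_neg at hcon
      interval_cases n <;> omega
    have hm : (3:ℝ) ≤ (n:ℝ) := by exact_mod_cast hn3
    have hs : (0:ℝ) ≤ (t:ℝ) := Nat.cast_nonneg t
    have htk2 : ((t:ℝ)) + 2 ≤ (k:ℝ) := by exact_mod_cast htk
    have hD4 : (4:ℝ) ≤ (n:ℝ)^2 - n - 2*t := by nlinarith [hr, htk2]
    have hD0 : (0:ℝ) < (n:ℝ)^2 - n - 2*t := by linarith
    have hb : a (t+1) * ((n:ℝ)^2 - n - 2*t)
        = a t * (((n:ℝ)^2 - n - 2*t) + 1 - a t) := by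
      rw [harec t ht,
        show N - (t:ℝ) = ((n:ℝ)^2 - (n:ℝ) - 2*(t:ℝ))/2 by rw [hN]; ring]
      rw [show 2 * (((n:ℝ)^2 - (n:ℝ) - 2*(t:ℝ))/2) = (n:ℝ)^2 - n - 2*t by ring, sub_mul,
        div_mul_cancel₀ _ hD0.ne']
      ring
    obtain ⟨g1, g2, g3⟩ := step (n:ℝ) (t:ℝ) (a t) (a (t+1)) hm hs hD4 hb h1 h2 h3
    refine ⟨g1, ?_, ?_⟩
    · push_cast
      linarith [g2]
    · push_cast
      nlinarith [g3]

/-- For the deterministic recurrence a_0 = n,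
a_{t+1} = a_t - a_t(a_t-1)/(2(N-t)) with N = n(n-1)/2, for all t with t < N we have
(n²/(n+t))(1 - 2t/(N-t)) ≤ a_t ≤ n²/(n+t). -/
theorem stmt_0 (n : ℕ) (hn : 0 < n) (N : ℝ) (hN : N = (n : ℝ) * ((n : ℝ) - 1) / 2)
    (a : ℕ → ℝ) (ha0 : a 0 = n)
    (harec : ∀ t : ℕ, (t : ℝ) < N →
      a (t + 1) = a t - a t * (a t - 1) / (2 * (N - (t : ℝ))))
    (t : ℕ) (ht : (t : ℝ) < N) :
    ((n : ℝ) ^ 2 / ((n : ℝ) + (t : ℝ))) * (1 - 2 * (t : ℝ) / (N - (t : ℝ))) ≤ a t ∧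
      a t ≤ (n : ℝ) ^ 2 / ((n : ℝ) + (t : ℝ)) := by
  obtain ⟨h1, h2, h3⟩ := invariant n hn N hN a ha0 harec t ht
  have hn1 : (1:ℝ) ≤ (n:ℝ) := by exact_mod_cast hn
  have hp : (0:ℝ) < (n:ℝ) + t := by
    linarith [Nat.cast_nonneg (α := ℝ) t]
  have hNt : (0:ℝ) < N - t := by linarith
  have hDN : 2*(N - (t:ℝ)) = (n:ℝ)^2 - n - 2*t := by rw [hN]; ring
  constructor
  · refine le_of_mul_le_mul_right ?_
      (show (0:ℝ) < ((n:ℝ)+t) * (2*(N - t)) by positivity)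
    have heq : ((n : ℝ) ^ 2 / ((n : ℝ) + (t : ℝ))) * (1 - 2 * (t : ℝ) / (N - (t : ℝ)))
        * (((n:ℝ)+t) * (2*(N - t)))
        = (n:ℝ)^2 * (2*(N - t) - 4*t) := by
      field_simp
      ring
    rw [heq, hDN]
    nlinarith [h3]
  · exact (le_div_iff₀ hp).2 h2
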